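/- Let a, b, c, z be distinct points in ℂ, and let d = min(|z-a|, |z-b|, |z-c|). Then the integral (1/π) ∬_ℂ |(z-a)(z-b)(z-c)| / (|w-a||w-b||w-c||w-z|) dA(w) is finite, positive, and bounded below by d. -/

import Mathlib

open MeasureTheory Set Metric Filter

noncomputable def uaux (t : ℝ) : ℝ := (Real.sqrt |t| * ((1 + |t|) * Real.sqrt (1 + |t|)))⁻¹

lemma uaux_nonneg (t : ℝ) : 0 ≤ uaux t := by unfold uaux; positivity

lemma integrable_waux : Integrable (fun t : ℝ => ((1 + |t|) * Real.sqrt (1 + |t|))⁻¹) := by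
  have h : (fun t : ℝ => ((1 + |t|) * Real.sqrt (1 + |t|))⁻¹)
      = fun t : ℝ => (1 + ‖t‖) ^ (-(3/2 : ℝ)) := by
    funext t
    have h0 : (0:ℝ) ≤ 1 + |t| := by positivity
    rw [Real.norm_eq_abs, Real.rpow_neg h0]
    congr 1
    rw [show (3/2 : ℝ) = 1 + 1/2 by norm_num, Real.rpow_add (by positivity), Real.rpow_one,
      ← Real.sqrt_eq_rpow]
  rw [h]
  exact integrable_one_add_norm (by simp; norm_num)

lemma intervalIntegrable_vaux :
    IntervalIntegrable (fun t : ℝ => (Real.sqrt |t|)⁻¹) volume (-1) 1 := by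
  have h01 : IntervalIntegrable (fun t : ℝ => (Real.sqrt |t|)⁻¹) volume 0 1 := by
    have hr : IntervalIntegrable (fun x : ℝ => x ^ (-(1/2) : ℝ)) volume 0 1 :=
      intervalIntegral.intervalIntegrable_rpow' (by norm_num)
    rw [intervalIntegrable_iff_integrableOn_Ioc_of_le zero_le_one] at hr ⊢
    refine hr.congr_fun (fun x hx => ?_) measurableSet_Ioc
    rw [abs_of_pos hx.1, Real.sqrt_eq_rpow, ← Real.rpow_neg hx.1.le]
  have h10 : IntervalIntegrable (fun t : ℝ => (Real.sqrt |t|)⁻¹) volume (-1) 0 := by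
    rw [IntervalIntegrable.iff_comp_neg]
    simpa [abs_neg] using h01.symm
  exact h10.trans h01

lemma integrable_uaux : Integrable uaux := by
  have hv : IntegrableOn (fun t : ℝ => (Real.sqrt |t|)⁻¹) (Icc (-1 : ℝ) 1) := by
    rw [← intervalIntegrable_iff_integrableOn_Icc_of_le (by norm_num : (-1:ℝ) ≤ 1)]
    exact intervalIntegrable_vaux
  have hind : Integrable ((Icc (-1:ℝ) 1).indicator fun t => (Real.sqrt |t|)⁻¹) :=
    hv.integrable_indicator measurableSet_Icc
  refine (hind.add integrable_waux).mono' ?_ (ae_of_all _ fun t => ?_)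
  · unfold uaux
    have hc : Continuous fun t : ℝ => Real.sqrt |t| * ((1 + |t|) * Real.sqrt (1 + |t|)) := by
      fun_prop
    exact hc.measurable.inv.aestronglyMeasurable
  · rw [Real.norm_eq_abs, abs_of_nonneg (uaux_nonneg t)]
    simp only [Pi.add_apply]
    by_cases ht : |t| ≤ 1
    · have hmem : t ∈ Icc (-1:ℝ) 1 := abs_le.mp ht
      rw [indicator_of_mem hmem]
      have h1 : uaux t ≤ (Real.sqrt |t|)⁻¹ := by
        unfold uaux
        rcases eq_or_ne t 0 with rfl | ht0
        · simp
        · have hst : 0 < Real.sqrt |t| := Real.sqrt_pos.mpr (abs_pos.mpr ht0)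
          apply inv_anti₀ hst
          have hD : (1:ℝ) ≤ (1 + |t|) * Real.sqrt (1 + |t|) := by
            nlinarith [Real.one_le_sqrt.mpr (show (1:ℝ) ≤ 1 + |t| by linarith [abs_nonneg t]), abs_nonneg t,
              Real.sqrt_nonneg (1+|t|)]
          exact le_mul_of_one_le_right hst.le hD
      have h2 : (0:ℝ) ≤ ((1 + |t|) * Real.sqrt (1 + |t|))⁻¹ := by positivity
      linarith
    · push_neg at ht
      have hmem : t ∉ Icc (-1:ℝ) 1 := by
        rw [mem_Icc, ← abs_le]; exact not_le.mpr ht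
      rw [indicator_of_notMem hmem]
      have h1 : uaux t ≤ ((1 + |t|) * Real.sqrt (1 + |t|))⁻¹ := by
        unfold uaux
        have hD : (0:ℝ) < (1 + |t|) * Real.sqrt (1 + |t|) := by positivity
        apply inv_anti₀ hD
        have : (1:ℝ) ≤ Real.sqrt |t| := Real.one_le_sqrt.mpr ht.le
        exact le_mul_of_one_le_left hD.le this
      simp only [ge_iff_le]
      linarith

noncomputable def Haux (w : ℂ) : ℝ := (‖w‖ * (1 + ‖w‖) ^ 3)⁻¹

lemma Haux_nonneg (w : ℂ) : 0 ≤ Haux w := by unfold Haux; positivity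

lemma Haux_meas : Measurable Haux := by
  have hc : Continuous fun w : ℂ => ‖w‖ * (1 + ‖w‖) ^ 3 := by fun_prop
  exact hc.measurable.inv

lemma Haux_le (w : ℂ) (hx : w.re ≠ 0) (hy : w.im ≠ 0) :
    Haux w ≤ uaux w.re * uaux w.im := by
  set x := |w.re| with hxdef
  set y := |w.im| with hydef
  have hx0 : 0 < x := abs_pos.mpr hx
  have hy0 : 0 < y := abs_pos.mpr hy
  have hr : (0:ℝ) ≤ ‖w‖ := norm_nonneg w
  have hxr : x ≤ ‖w‖ := by exact Complex.abs_re_le_norm w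
  have hyr : y ≤ ‖w‖ := by exact Complex.abs_im_le_norm w
  have hr2 : ‖w‖ ^ 2 = w.re ^ 2 + w.im ^ 2 := by
    rw [Complex.sq_norm, Complex.normSq_apply]; ring
  have hxy : x * y ≤ ‖w‖ ^ 2 := by
    nlinarith [sq_nonneg (x - y), sq_abs w.re, sq_abs w.im]
  have A1 : Real.sqrt x * Real.sqrt y ≤ ‖w‖ := by
    rw [← Real.sqrt_mul hx0.le]
    have := Real.sqrt_le_sqrt hxy
    rwa [Real.sqrt_sq hr] at this
  have A2 : (1 + x) * (1 + y) ≤ (1 + ‖w‖) ^ 2 := by nlinarith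
  have A3 : Real.sqrt (1 + x) * Real.sqrt (1 + y) ≤ 1 + ‖w‖ := by
    rw [← Real.sqrt_mul (by positivity)]
    have := Real.sqrt_le_sqrt A2
    rwa [Real.sqrt_sq (by positivity)] at this
  have hP : (Real.sqrt x * Real.sqrt y) *
      (((1 + x) * (1 + y)) * (Real.sqrt (1 + x) * Real.sqrt (1 + y)))
      ≤ ‖w‖ * ((1 + ‖w‖) ^ 2 * (1 + ‖w‖)) :=
    mul_le_mul A1 (mul_le_mul A2 A3 (by positivity) (by positivity)) (by positivity) hr
  unfold Haux uaux
  rw [← hxdef, ← hydef, ← mul_inv]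
  apply inv_anti₀ (by positivity)
  calc Real.sqrt x * ((1 + x) * Real.sqrt (1 + x)) * (Real.sqrt y * ((1 + y) * Real.sqrt (1 + y)))
      = (Real.sqrt x * Real.sqrt y) *
        (((1 + x) * (1 + y)) * (Real.sqrt (1 + x) * Real.sqrt (1 + y))) := by ring
    _ ≤ ‖w‖ * ((1 + ‖w‖) ^ 2 * (1 + ‖w‖)) := hP
    _ = ‖w‖ * (1 + ‖w‖) ^ 3 := by ring

lemma ae_re_im_ne : ∀ᵐ w : ℂ, w.re ≠ 0 ∧ w.im ≠ 0 := by
  have hre : volume {w : ℂ | w.re = 0} = 0 := by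
    have hs : {w : ℂ | w.re = 0} = Complex.measurableEquivRealProd ⁻¹' ({0} ×ˢ univ) := by
      ext w; simp [Complex.measurableEquivRealProd_apply, eq_comm]
    rw [hs, Complex.volume_preserving_equiv_real_prod.measure_preimage
      (((measurableSet_singleton 0).prod MeasurableSet.univ).nullMeasurableSet)]
    rw [Measure.volume_eq_prod, Measure.prod_prod]
    simp
  have him : volume {w : ℂ | w.im = 0} = 0 := by
    have hs : {w : ℂ | w.im = 0} = Complex.measurableEquivRealProd ⁻¹' (univ ×ˢ {0}) := by
      ext w; simp [Complex.measurableEquivRealProd_apply, eq_comm]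
    rw [hs, Complex.volume_preserving_equiv_real_prod.measure_preimage
      ((MeasurableSet.univ.prod (measurableSet_singleton 0)).nullMeasurableSet)]
    rw [Measure.volume_eq_prod, Measure.prod_prod]
    simp
  have h1 : ∀ᵐ w : ℂ, w.re ≠ 0 := by
    rw [ae_iff]; simpa using hre
  have h2 : ∀ᵐ w : ℂ, w.im ≠ 0 := by
    rw [ae_iff]; simpa using him
  exact h1.and h2

lemma integrable_Haux : Integrable Haux := by
  have IU2 : Integrable (fun p : ℝ × ℝ => uaux p.1 * uaux p.2) (volume.prod volume) :=
    integrable_uaux.mul_prod integrable_uaux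
  have IUc : Integrable ((fun p : ℝ × ℝ => uaux p.1 * uaux p.2) ∘
      Complex.measurableEquivRealProd) := by
    rw [Complex.volume_preserving_equiv_real_prod.integrable_comp_emb
      Complex.measurableEquivRealProd.measurableEmbedding]
    rwa [Measure.volume_eq_prod]
  refine IUc.mono' Haux_meas.aestronglyMeasurable ?_
  filter_upwards [ae_re_im_ne] with w hw
  rw [Real.norm_eq_abs, abs_of_nonneg (Haux_nonneg w)]
  exact Haux_le w hw.1 hw.2

lemma helper_bound (A e r0 r1 r2 r3 : ℝ) (hA : 0 ≤ A) (he : 0 < e) (h0 : 0 < r0)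
    (h1 : e ≤ r1) (h1' : r0 ≤ r1) (h2 : e ≤ r2) (h2' : r0 ≤ r2)
    (h3 : e ≤ r3) (h3' : r0 ≤ r3) :
    A / (r0 * r1 * r2 * r3) ≤ (A / (e / (1 + e)) ^ 3) * (r0 * (1 + r0) ^ 3)⁻¹ := by
  have hc : 0 < e / (1 + e) := by positivity
  set c := e / (1 + e) with hcdef
  have key : ∀ r : ℝ, e ≤ r → r0 ≤ r → c * (1 + r0) ≤ r := by
    intro r hh hh'
    rw [hcdef, div_mul_eq_mul_div, div_le_iff₀ (by positivity)]
    nlinarith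
  have k1 := key r1 h1 h1'
  have k2 := key r2 h2 h2'
  have k3 := key r3 h3 h3'
  have ht : 0 < c * (1 + r0) := by positivity
  have hD : c ^ 3 * (r0 * (1 + r0) ^ 3) ≤ r0 * r1 * r2 * r3 := by
    calc c ^ 3 * (r0 * (1 + r0) ^ 3)
        = r0 * ((c * (1 + r0)) * (c * (1 + r0)) * (c * (1 + r0))) := by ring
      _ ≤ r0 * (r1 * r2 * r3) := by
          refine mul_le_mul_of_nonneg_left ?_ h0.le
          have hr1 : (0:ℝ) ≤ r1 := (he.trans_le h1).le
          have hr2 : (0:ℝ) ≤ r2 := (he.trans_le h2).le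
          exact mul_le_mul (mul_le_mul k1 k2 ht.le hr1) k3 ht.le (mul_nonneg hr1 hr2)
      _ = r0 * r1 * r2 * r3 := by ring
  calc A / (r0 * r1 * r2 * r3) ≤ A / (c ^ 3 * (r0 * (1 + r0) ^ 3)) := by
        gcongr
    _ = A / c ^ 3 * (r0 * (1 + r0) ^ 3)⁻¹ := by rw [div_mul_eq_div_div, div_eq_mul_inv]

lemma helper2 (dd s : ℝ) (hdd : 0 < dd) (hs : 0 ≤ s) :
    dd ^ 3 / ((dd + s) ^ 3 * s) ≤ (dd ^ 3 / (dd / (1 + dd)) ^ 3) * (s * (1 + s) ^ 3)⁻¹ := by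
  rcases hs.eq_or_lt with h0 | h0
  · rw [← h0]; simp
  · have key : dd / (1 + dd) * (1 + s) ≤ dd + s := by
      rw [div_mul_eq_mul_div, div_le_iff₀ (by positivity)]
      nlinarith
    have hc : 0 < dd / (1 + dd) := by positivity
    have hD : (dd / (1 + dd)) ^ 3 * (s * (1 + s) ^ 3) ≤ (dd + s) ^ 3 * s := by
      calc (dd / (1 + dd)) ^ 3 * (s * (1 + s) ^ 3) = ((dd / (1 + dd)) * (1 + s)) ^ 3 * s := by ring
        _ ≤ (dd + s) ^ 3 * s := by
            refine mul_le_mul_of_nonneg_right ?_ hs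
            exact pow_le_pow_left₀ (by positivity) key 3
    calc dd ^ 3 / ((dd + s) ^ 3 * s) ≤ dd ^ 3 / ((dd / (1 + dd)) ^ 3 * (s * (1 + s) ^ 3)) := by
          gcongr
      _ = dd ^ 3 / (dd / (1 + dd)) ^ 3 * (s * (1 + s) ^ 3)⁻¹ := by
          rw [div_mul_eq_div_div, div_eq_mul_inv]

lemma radial_integral (dd : ℝ) (hdd : 0 < dd) :
    ∫ y in Ioi (0:ℝ), ((dd + y) ^ 3)⁻¹ = 2⁻¹ * (dd ^ 2)⁻¹ := by
  have hder : ∀ x ∈ Ici (0:ℝ), HasDerivAt (fun y : ℝ => -(2⁻¹) * ((dd + y) ^ 2)⁻¹)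
      ((dd + x) ^ 3)⁻¹ x := by
    intro x hx
    have hx0 : (0:ℝ) ≤ x := hx
    have hne : dd + x ≠ 0 := by positivity
    have h1 : HasDerivAt (fun y : ℝ => dd + y) 1 x := (hasDerivAt_id x).const_add dd
    have h2 : HasDerivAt (fun y : ℝ => (dd + y) ^ 2) (2 * (dd + x) ^ 1 * 1) x := h1.pow 2
    have h3 := h2.inv (pow_ne_zero 2 hne)
    have h4 := h3.const_mul (-(2⁻¹ : ℝ))
    refine h4.congr_deriv ?_
    field_simp
  have hpos : ∀ x ∈ Ioi (0:ℝ), 0 ≤ ((dd + x) ^ 3)⁻¹ := by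
    intro x hx
    have : (0:ℝ) < x := hx
    positivity
  have hlim : Tendsto (fun y : ℝ => -(2⁻¹) * ((dd + y) ^ 2)⁻¹) atTop (nhds 0) := by
    have t1 : Tendsto (fun y : ℝ => dd + y) atTop atTop :=
      tendsto_atTop_add_const_left _ dd tendsto_id
    have t2 : Tendsto (fun y : ℝ => (dd + y)⁻¹) atTop (nhds 0) := t1.inv_tendsto_atTop
    have t3 := t2.pow 2
    have t4 : Tendsto (fun y : ℝ => ((dd + y) ^ 2)⁻¹) atTop (nhds 0) := by
      simpa [inv_pow] using t3
    simpa using t4.const_mul (-(2⁻¹ : ℝ))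
  rw [integral_Ioi_of_hasDerivAt_of_nonneg' hder hpos hlim]
  norm_num

set_option maxHeartbeats 1000000 in
theorem stmt_16 (a b c z : ℂ) (hab : a ≠ b) (hbc : b ≠ c) (hac : a ≠ c)
    (hza : z ≠ a) (hzb : z ≠ b) (hzc : z ≠ c)
    (d : ℝ) (hd : d = min (‖z - a‖) (min (‖z - b‖) (‖z - c‖))) :
    let f : ℂ → ℝ := fun w =>
      ‖(z - a) * (z - b) * (z - c)‖ /
        (‖w - a‖ * ‖w - b‖ * ‖w - c‖ * ‖w - z‖)
    Integrable f volume ∧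
    0 < (1 / Real.pi) * ∫ w : ℂ, f w ∧
    d ≤ (1 / Real.pi) * ∫ w : ℂ, f w := by
  intro f
  have hpa : 0 < ‖z - a‖ := norm_pos_iff.mpr (sub_ne_zero.mpr hza)
  have hpb : 0 < ‖z - b‖ := norm_pos_iff.mpr (sub_ne_zero.mpr hzb)
  have hpc : 0 < ‖z - c‖ := norm_pos_iff.mpr (sub_ne_zero.mpr hzc)
  have hd' : d = min ‖z - a‖ (min ‖z - b‖ ‖z - c‖) := by
    rw [hd]
  have hd0 : 0 < d := by
    rw [hd', lt_min_iff, lt_min_iff]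
    exact ⟨hpa, hpb, hpc⟩
  have hda : d ≤ ‖z - a‖ := by rw [hd']; exact min_le_left _ _
  have hdb : d ≤ ‖z - b‖ := by rw [hd']; exact (min_le_right _ _).trans (min_le_left _ _)
  have hdc : d ≤ ‖z - c‖ := by rw [hd']; exact (min_le_right _ _).trans (min_le_right _ _)
  have hf_eq : ∀ w, f w = (‖z - a‖ * ‖z - b‖ * ‖z - c‖) /
      (‖w - a‖ * ‖w - b‖ * ‖w - c‖ * ‖w - z‖) := by
    intro w
    show ‖(z - a) * (z - b) * (z - c)‖ /
        (‖w - a‖ * ‖w - b‖ * ‖w - c‖ * ‖w - z‖) = _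
    rw [norm_mul, norm_mul]
  have hf_nn : ∀ w, 0 ≤ f w := by
    intro w
    rw [hf_eq]
    positivity
  have hf_meas : AEStronglyMeasurable f volume := by
    apply Measurable.aestronglyMeasurable
    have hone : ∀ p : ℂ, Continuous fun w : ℂ => ‖w - p‖ := fun p =>
      continuous_norm.comp (continuous_id.sub continuous_const)
    have hcont : Continuous fun w : ℂ => ‖w - a‖ * ‖w - b‖ *
        ‖w - c‖ * ‖w - z‖ :=
      (((hone a).mul (hone b)).mul (hone c)).mul (hone z)
    exact measurable_const.div hcont.measurable
  set A := ‖z - a‖ * ‖z - b‖ * ‖z - c‖ with hA_def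
  have hA0 : 0 < A := by positivity
  set m := min (min (min (dist a b) (dist a c)) (dist a z))
      (min (min (dist b c) (dist b z)) (dist c z)) with hm_def
  have hm0 : 0 < m := by
    rw [hm_def]
    simp only [lt_min_iff, dist_pos]
    exact ⟨⟨⟨hab, hac⟩, hza.symm⟩, ⟨hbc, hzb.symm⟩, hzc.symm⟩
  set e := m / 2 with he_def
  have he0 : 0 < e := by rw [he_def]; positivity
  have h2ab : 2 * e ≤ dist a b := by
    rw [he_def]; rw [show 2 * (m / 2) = m from by ring, hm_def]; simp [min_le_iff]
  have h2ac : 2 * e ≤ dist a c := by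
    rw [he_def]; rw [show 2 * (m / 2) = m from by ring, hm_def]; simp [min_le_iff]
  have h2az : 2 * e ≤ dist a z := by
    rw [he_def]; rw [show 2 * (m / 2) = m from by ring, hm_def]; simp [min_le_iff]
  have h2bc : 2 * e ≤ dist b c := by
    rw [he_def]; rw [show 2 * (m / 2) = m from by ring, hm_def]; simp [min_le_iff]
  have h2bz : 2 * e ≤ dist b z := by
    rw [he_def]; rw [show 2 * (m / 2) = m from by ring, hm_def]; simp [min_le_iff]
  have h2cz : 2 * e ≤ dist c z := by
    rw [he_def]; rw [show 2 * (m / 2) = m from by ring, hm_def]; simp [min_le_iff]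
  set C := A / (e / (1 + e)) ^ 3 with hC_def
  have hC0 : 0 ≤ C := by positivity
  set G := fun w : ℂ => C * (Haux (w - a) + Haux (w - b) + Haux (w - c) + Haux (w - z))
    with hG_def
  have IG : Integrable G := by
    refine Integrable.const_mul ?_ C
    exact (((integrable_Haux.comp_sub_right a).add (integrable_Haux.comp_sub_right b)).add
      (integrable_Haux.comp_sub_right c)).add (integrable_Haux.comp_sub_right z)
  have hfG : ∀ w, f w ≤ G w := by
    intro w
    by_cases hw : w = a ∨ w = b ∨ w = c ∨ w = z
    · have hf0 : f w = 0 := by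
        rcases hw with rfl | rfl | rfl | rfl <;> (rw [hf_eq]; simp)
      rw [hf0, hG_def]
      exact mul_nonneg hC0 (by
        have := Haux_nonneg (w - a); have := Haux_nonneg (w - b)
        have := Haux_nonneg (w - c); have := Haux_nonneg (w - z); linarith)
    push_neg at hw
    obtain ⟨hwa, hwb, hwc, hwz⟩ := hw
    have hqa : 0 < ‖w - a‖ := norm_pos_iff.mpr (sub_ne_zero.mpr hwa)
    have hqb : 0 < ‖w - b‖ := norm_pos_iff.mpr (sub_ne_zero.mpr hwb)
    have hqc : 0 < ‖w - c‖ := norm_pos_iff.mpr (sub_ne_zero.mpr hwc)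
    have hqz : 0 < ‖w - z‖ := norm_pos_iff.mpr (sub_ne_zero.mpr hwz)
    have core : ∀ p0 p1 p2 p3 : ℂ, 2 * e ≤ dist p0 p1 → 2 * e ≤ dist p0 p2 →
        2 * e ≤ dist p0 p3 → w ≠ p0 → ‖w - p0‖ ≤ ‖w - p1‖ → ‖w - p0‖ ≤ ‖w - p2‖ →
        ‖w - p0‖ ≤ ‖w - p3‖ →
        A / (‖w - p0‖ * ‖w - p1‖ * ‖w - p2‖ * ‖w - p3‖) ≤ C * Haux (w - p0) := by
      intro p0 p1 p2 p3 hd1 hd2 hd3 hw0 hle1 hle2 hle3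
      have h00 : 0 < ‖w - p0‖ := norm_pos_iff.mpr (sub_ne_zero.mpr hw0)
      have tri : ∀ p' : ℂ, dist p0 p' ≤ ‖w - p0‖ + ‖w - p'‖ := by
        intro p'
        rw [dist_eq_norm]
        calc ‖p0 - p'‖ = ‖-(w - p0) + (w - p')‖ := by congr 1; ring
          _ ≤ ‖-(w - p0)‖ + ‖w - p'‖ := norm_add_le _ _
          _ = ‖w - p0‖ + ‖w - p'‖ := by rw [norm_neg]
      have he1 : e ≤ ‖w - p1‖ := by have := tri p1; linarith
      have he2 : e ≤ ‖w - p2‖ := by have := tri p2; linarith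
      have he3 : e ≤ ‖w - p3‖ := by have := tri p3; linarith
      have := helper_bound A e ‖w - p0‖ ‖w - p1‖ ‖w - p2‖ ‖w - p3‖ hA0.le he0 h00
        he1 hle1 he2 hle2 he3 hle3
      rw [hC_def]
      simpa [Haux] using this
    have habcz : f w = A / (‖w - a‖ * ‖w - b‖ * ‖w - c‖ * ‖w - z‖) := hf_eq w
    have done_a : ‖w - a‖ ≤ ‖w - b‖ → ‖w - a‖ ≤ ‖w - c‖ → ‖w - a‖ ≤ ‖w - z‖ → f w ≤ G w := by
      intro h1 h2 h3
      rw [habcz]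
      refine le_trans (core a b c z h2ab h2ac h2az hwa h1 h2 h3) ?_
      rw [hG_def]
      have n1 := Haux_nonneg (w - b); have n2 := Haux_nonneg (w - c)
      have n3 := Haux_nonneg (w - z)
      refine mul_le_mul_of_nonneg_left (by linarith) hC0
    have done_b : ‖w - b‖ ≤ ‖w - a‖ → ‖w - b‖ ≤ ‖w - c‖ → ‖w - b‖ ≤ ‖w - z‖ → f w ≤ G w := by
      intro h1 h2 h3
      rw [habcz, show ‖w - a‖ * ‖w - b‖ * ‖w - c‖ * ‖w - z‖
        = ‖w - b‖ * ‖w - a‖ * ‖w - c‖ * ‖w - z‖ from by ring]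
      refine le_trans (core b a c z (by rw [dist_comm]; exact h2ab) h2bc h2bz hwb h1 h2 h3) ?_
      rw [hG_def]
      have n1 := Haux_nonneg (w - a); have n2 := Haux_nonneg (w - c)
      have n3 := Haux_nonneg (w - z)
      refine mul_le_mul_of_nonneg_left (by linarith) hC0
    have done_c : ‖w - c‖ ≤ ‖w - a‖ → ‖w - c‖ ≤ ‖w - b‖ → ‖w - c‖ ≤ ‖w - z‖ → f w ≤ G w := by
      intro h1 h2 h3
      rw [habcz, show ‖w - a‖ * ‖w - b‖ * ‖w - c‖ * ‖w - z‖
        = ‖w - c‖ * ‖w - a‖ * ‖w - b‖ * ‖w - z‖ from by ring]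
      refine le_trans (core c a b z (by rw [dist_comm]; exact h2ac)
        (by rw [dist_comm]; exact h2bc) h2cz hwc h1 h2 h3) ?_
      rw [hG_def]
      have n1 := Haux_nonneg (w - a); have n2 := Haux_nonneg (w - b)
      have n3 := Haux_nonneg (w - z)
      refine mul_le_mul_of_nonneg_left (by linarith) hC0
    have done_z : ‖w - z‖ ≤ ‖w - a‖ → ‖w - z‖ ≤ ‖w - b‖ → ‖w - z‖ ≤ ‖w - c‖ → f w ≤ G w := by
      intro h1 h2 h3
      rw [habcz, show ‖w - a‖ * ‖w - b‖ * ‖w - c‖ * ‖w - z‖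
        = ‖w - z‖ * ‖w - a‖ * ‖w - b‖ * ‖w - c‖ from by ring]
      refine le_trans (core z a b c (by rw [dist_comm]; exact h2az)
        (by rw [dist_comm]; exact h2bz) (by rw [dist_comm]; exact h2cz) hwz h1 h2 h3) ?_
      rw [hG_def]
      have n1 := Haux_nonneg (w - a); have n2 := Haux_nonneg (w - b)
      have n3 := Haux_nonneg (w - c)
      refine mul_le_mul_of_nonneg_left (by linarith) hC0
    rcases le_total ‖w - a‖ ‖w - b‖ with h1 | h1 <;>
      rcases le_total ‖w - c‖ ‖w - z‖ with h2 | h2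
    · rcases le_total ‖w - a‖ ‖w - c‖ with h3 | h3
      · exact done_a h1 h3 (h3.trans h2)
      · exact done_c (h3) (h3.trans h1) h2
    · rcases le_total ‖w - a‖ ‖w - z‖ with h3 | h3
      · exact done_a h1 (h3.trans h2) h3
      · exact done_z h3 (h3.trans h1) h2
    · rcases le_total ‖w - b‖ ‖w - c‖ with h3 | h3
      · exact done_b h1 h3 (h3.trans h2)
      · exact done_c (h3.trans h1) h3 h2
    · rcases le_total ‖w - b‖ ‖w - z‖ with h3 | h3
      · exact done_b h1 (h3.trans h2) h3
      · exact done_z (h3.trans h1) h3 h2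
  have Hf : Integrable f := by
    refine IG.mono' hf_meas (ae_of_all _ fun w => ?_)
    rw [Real.norm_eq_abs, abs_of_nonneg (hf_nn w)]
    exact hfG w
  -- lower bound part
  set g0 := fun w : ℂ => d ^ 3 / ((d + ‖w - z‖) ^ 3 * ‖w - z‖) with hg0_def
  have hg0_nn : ∀ w, 0 ≤ g0 w := by
    intro w
    exact div_nonneg (pow_nonneg hd0.le 3) (by positivity)
  have Ig0 : Integrable g0 := by
    refine ((integrable_Haux.comp_sub_right z).const_mul (d ^ 3 / (d / (1 + d)) ^ 3)).mono'
      ?_ (ae_of_all _ fun w => ?_)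
    · apply Measurable.aestronglyMeasurable
      have hcont : Continuous fun w : ℂ => (d + ‖w - z‖) ^ 3 * ‖w - z‖ := by fun_prop
      exact measurable_const.div hcont.measurable
    · rw [Real.norm_eq_abs, abs_of_nonneg (hg0_nn w)]
      have := helper2 d ‖w - z‖ hd0 (norm_nonneg _)
      simpa [Haux] using this
  have hg0f : g0 ≤ᵐ[volume] f := by
    have h1 : ∀ᵐ w : ℂ, w ≠ a := by
      rw [ae_iff]; simpa using measure_singleton (a : ℂ)
    have h2 : ∀ᵐ w : ℂ, w ≠ b := by
      rw [ae_iff]; simpa using measure_singleton (b : ℂ)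
    have h3 : ∀ᵐ w : ℂ, w ≠ c := by
      rw [ae_iff]; simpa using measure_singleton (c : ℂ)
    filter_upwards [h1, h2, h3] with w hwa hwb hwc
    by_cases hwz : w = z
    · subst hwz
      have hz0 : ‖w - w‖ = (0:ℝ) := by simp
      show g0 w ≤ f w
      rw [hf_eq, hg0_def]
      simp [hz0]
    · have hqa : 0 < ‖w - a‖ := norm_pos_iff.mpr (sub_ne_zero.mpr hwa)
      have hqb : 0 < ‖w - b‖ := norm_pos_iff.mpr (sub_ne_zero.mpr hwb)
      have hqc : 0 < ‖w - c‖ := norm_pos_iff.mpr (sub_ne_zero.mpr hwc)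
      have hs : 0 < ‖w - z‖ := norm_pos_iff.mpr (sub_ne_zero.mpr hwz)
      show g0 w ≤ f w
      rw [hf_eq, hg0_def]
      rw [div_le_div_iff₀ (by positivity) (by positivity)]
      have tri : ∀ p : ℂ, ‖w - p‖ ≤ ‖w - z‖ + ‖z - p‖ := by
        intro p
        calc ‖w - p‖ = ‖(w - z) + (z - p)‖ := by congr 1; ring
          _ ≤ ‖w - z‖ + ‖z - p‖ := norm_add_le _ _
      have e1 : d * ‖w - a‖ ≤ ‖z - a‖ * (d + ‖w - z‖) := by
        calc d * ‖w - a‖ ≤ d * (‖w - z‖ + ‖z - a‖) :=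
              mul_le_mul_of_nonneg_left (tri a) hd0.le
          _ = d * ‖w - z‖ + d * ‖z - a‖ := by ring
          _ ≤ ‖z - a‖ * ‖w - z‖ + d * ‖z - a‖ := by
              have := mul_le_mul_of_nonneg_right hda hs.le
              linarith
          _ = ‖z - a‖ * (d + ‖w - z‖) := by ring
      have e2 : d * ‖w - b‖ ≤ ‖z - b‖ * (d + ‖w - z‖) := by
        calc d * ‖w - b‖ ≤ d * (‖w - z‖ + ‖z - b‖) :=
              mul_le_mul_of_nonneg_left (tri b) hd0.le
          _ = d * ‖w - z‖ + d * ‖z - b‖ := by ring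
          _ ≤ ‖z - b‖ * ‖w - z‖ + d * ‖z - b‖ := by
              have := mul_le_mul_of_nonneg_right hdb hs.le
              linarith
          _ = ‖z - b‖ * (d + ‖w - z‖) := by ring
      have e3 : d * ‖w - c‖ ≤ ‖z - c‖ * (d + ‖w - z‖) := by
        calc d * ‖w - c‖ ≤ d * (‖w - z‖ + ‖z - c‖) :=
              mul_le_mul_of_nonneg_left (tri c) hd0.le
          _ = d * ‖w - z‖ + d * ‖z - c‖ := by ring
          _ ≤ ‖z - c‖ * ‖w - z‖ + d * ‖z - c‖ := by
              have := mul_le_mul_of_nonneg_right hdc hs.le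
              linarith
          _ = ‖z - c‖ * (d + ‖w - z‖) := by ring
      have hds : 0 < d + ‖w - z‖ := by positivity
      calc d ^ 3 * (‖w - a‖ * ‖w - b‖ * ‖w - c‖ * ‖w - z‖)
          = ((d * ‖w - a‖) * (d * ‖w - b‖) * (d * ‖w - c‖)) * ‖w - z‖ := by ring
        _ ≤ ((‖z - a‖ * (d + ‖w - z‖)) * (‖z - b‖ * (d + ‖w - z‖)) *
            (‖z - c‖ * (d + ‖w - z‖))) * ‖w - z‖ := by
            refine mul_le_mul_of_nonneg_right ?_ hs.le
            refine mul_le_mul (mul_le_mul e1 e2 (by positivity) (by positivity)) e3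
              (by positivity) (by positivity)
        _ = A * ((d + ‖w - z‖) ^ 3 * ‖w - z‖) := by rw [hA_def]; ring
  have hval : ∫ w : ℂ, g0 w = Real.pi * d := by
    have step1 : ∫ w : ℂ, g0 w = ∫ w : ℂ, d ^ 3 / ((d + ‖w‖) ^ 3 * ‖w‖) := by
      exact integral_sub_right_eq_self (fun w : ℂ => d ^ 3 / ((d + ‖w‖) ^ 3 * ‖w‖)) z
    rw [step1]
    have step2 := MeasureTheory.integral_fun_norm_addHaar (volume : Measure ℂ)
      (fun y : ℝ => d ^ 3 / ((d + y) ^ 3 * y))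
    rw [step2, Complex.finrank_real_complex]
    have hb : (volume (ball (0:ℂ) 1)).toReal = Real.pi := by
      rw [Complex.volume_ball]
      simp
    have hcg : EqOn (fun y : ℝ => y ^ (2 - 1) • (d ^ 3 / ((d + y) ^ 3 * y)))
        (fun y : ℝ => d ^ 3 * ((d + y) ^ 3)⁻¹) (Ioi 0) := by
      intro y hy
      have hy0 : (0:ℝ) < y := hy
      have hdy : (0:ℝ) < d + y := by positivity
      simp only [pow_one, smul_eq_mul]
      field_simp
      ring
    rw [setIntegral_congr_fun measurableSet_Ioi hcg, MeasureTheory.integral_const_mul,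
      radial_integral d hd0, measureReal_def, hb]
    simp only [nsmul_eq_mul, smul_eq_mul]
    field_simp
    ring
  have hmono : ∫ w : ℂ, g0 w ≤ ∫ w : ℂ, f w := integral_mono_ae Ig0 Hf hg0f
  have hπ : 0 < Real.pi := Real.pi_pos
  have hfinal : d ≤ (1 / Real.pi) * ∫ w : ℂ, f w := by
    rw [one_div, inv_mul_eq_div, le_div_iff₀ hπ]
    calc d * Real.pi = Real.pi * d := by ring
      _ = ∫ w : ℂ, g0 w := hval.symm
      _ ≤ ∫ w : ℂ, f w := hmono
  exact ⟨Hf, lt_of_lt_of_le hd0 hfinal, hfinal⟩
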